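/- Fix a real number ε with 0 < ε < 1/8, set α_n = ⌊n^{1/2+ε}⌋, β_n = ⌊n^{1/4+2ε}⌋, γ_n = ⌊n^{1/8+4ε}⌋, λ_n = ⌊n^{1/8+5ε}⌋, u_n = a^{α_n}, v_n = u_n (b u_n)^{β_n}, and w_n = v_n (bb v_n)^{γ_n}. Let f : [n] → [n] be a fixed mapping (the a-transitions) with cyclic set C, having at most α_n cyclic points and height at most α_n. Let β be a fixed partial b-transition function defined exactly on the set S = C ∪ {β(x) : x ∈ Cyc(F)}, where F : C → C is the map F(x) = f^{α_n}(β(x)), such that: F has at most β_n cyclic points and height at most β_n; for every F-cyclic q, β(q) ∉ C; the map G on Cyc(F) induced by reading bb v_n (i.e., G(q) = δ_{v_n}(β(β(q))) computed using f for a-transitions and β for b-transitions) has at most γ_n cyclic points and height at most γ_n; and for every G-cyclic q, β(β(q)) ∉ S. Extend β to a total function b : [n] → [n] by choosing b(x) uniformly at random and independently in [n] for every x ∉ S, and let δ be the complete automaton with δ_a = f and δ_b = b. Then for any two G-cyclic states p and q, the probability that δ_{b^j w_n}(p) ≠ δ_{b^j w_n}(q) for every j ∈ {0, 1, …, λ_n}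 is at most 6 n^{−3/8+5ε}, for n large enough. -/

import Mathlib

open Classical

/-- The two-letter alphabet `{a, b}`. -/
inductive Letter
  | a
  | b
deriving DecidableEq

instance : Fintype Letter := ⟨{Letter.a, Letter.b}, by intro x; cases x <;> simp⟩

/-- The action of a word on the states of a deterministic complete automaton:
`act δ w q` is the state reached from `q` after reading the word `w`
(first letter applied first, so that `δ_{wc} = δ_c ∘ δ_w`). -/
def act {n : ℕ} {A : Type*} (δ : Fin n → A → Fin n) : List A → Fin n → Fin n
  | [], q => q
  | c :: w, q => act δ w (δ q c)

/-- A point `x` is cyclic for `f` if some positive iterate of `f` sends `x` to itself. -/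
def IsCyclicPt {n : ℕ} (f : Fin n → Fin n) (x : Fin n) : Prop :=
  ∃ i > 0, f^[i] x = x

/-- The set of cyclic points of a mapping `f` on `[n]`. -/
noncomputable def cyclicPts {n : ℕ} (f : Fin n → Fin n) : Finset (Fin n) :=
  Finset.univ.filter (IsCyclicPt f)

/-- The height of a point `x`: the least `i ≥ 0` such that `f^[i] x` is cyclic. -/
noncomputable def heightOf {n : ℕ} (f : Fin n → Fin n) (x : Fin n) : ℕ :=
  sInf {i : ℕ | IsCyclicPt f (f^[i] x)}

/-- The height of a mapping: the maximal height of a point. -/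
noncomputable def height {n : ℕ} (f : Fin n → Fin n) : ℕ :=
  Finset.univ.sup (heightOf f)

/-- `α_n = ⌊n^(1/2+ε)⌋`. -/
noncomputable def alphaN (ε : ℝ) (n : ℕ) : ℕ := ⌊(n : ℝ) ^ ((1 : ℝ)/2 + ε)⌋₊

/-- `β_n = ⌊n^(1/4+2ε)⌋`. -/
noncomputable def betaN (ε : ℝ) (n : ℕ) : ℕ := ⌊(n : ℝ) ^ ((1 : ℝ)/4 + 2*ε)⌋₊

/-- `γ_n = ⌊n^(1/8+4ε)⌋`. -/
noncomputable def gammaN (ε : ℝ) (n : ℕ) : ℕ := ⌊(n : ℝ) ^ ((1 : ℝ)/8 + 4*ε)⌋₊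

/-- The word `u_n = a^{α_n}`. -/
noncomputable def uWord (ε : ℝ) (n : ℕ) : List Letter :=
  List.replicate (alphaN ε n) Letter.a

/-- The word `v_n = u_n (b u_n)^{β_n}`. -/
noncomputable def vWord (ε : ℝ) (n : ℕ) : List Letter :=
  uWord ε n ++ (List.replicate (betaN ε n) (Letter.b :: uWord ε n)).flatten

/-- The word `w_n = v_n (bb v_n)^{γ_n}`. -/
noncomputable def wWord (ε : ℝ) (n : ℕ) : List Letter :=
  vWord ε n ++ (List.replicate (gammaN ε n) (Letter.b :: Letter.b :: vWord ε n)).flatten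

/-- `λ_n = ⌊n^(1/8+5ε)⌋`. -/
noncomputable def lambdaN (ε : ℝ) (n : ℕ) : ℕ := ⌊(n : ℝ) ^ ((1 : ℝ)/8 + 5*ε)⌋₊

/-- The automaton whose `a`-transitions are `f` and whose `b`-transitions are `b`. -/
def mkAut {n : ℕ} (f b : Fin n → Fin n) : Fin n → Letter → Fin n :=
  fun q l => match l with
    | Letter.a => f q
    | Letter.b => b q

/-- The map `F(x) = f^[α_n](β(x))` (whose restriction to `Cyc(f)` is the map `F` of the
construction). -/
noncomputable def Fmap (ε : ℝ) {n : ℕ} (f β : Fin n → Fin n) : Fin n → Fin n :=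
  fun x => f^[alphaN ε n] (β x)

/-- The set `Cyc(F)` of `F`-cyclic states. -/
noncomputable def CycF (ε : ℝ) {n : ℕ} (f β : Fin n → Fin n) : Finset (Fin n) :=
  (cyclicPts f).filter (IsCyclicPt (Fmap ε f β))

/-- The set `S = C ∪ {β(x) : x ∈ Cyc(F)}` on which the partial `b`-transition function
`β` is defined. -/
noncomputable def Sset (ε : ℝ) {n : ℕ} (f β : Fin n → Fin n) : Finset (Fin n) :=
  cyclicPts f ∪ (CycF ε f β).image β

/-- The map `G(q) = δ_{v_n}(β(β(q)))`, computed using `f` for the `a`-transitions and `β`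
for the `b`-transitions (its restriction to `Cyc(F)` is the map `G` of the
construction). -/
noncomputable def Gmap (ε : ℝ) {n : ℕ} (f β : Fin n → Fin n) : Fin n → Fin n :=
  fun q => act (mkAut f β) (vWord ε n) (β (β q))

/-- The complete automaton obtained by extending the partial `b`-transition function `β`
(defined on `S`) by the values of `c` outside of `S`. -/
noncomputable def extAut (ε : ℝ) {n : ℕ} (f β c : Fin n → Fin n) : Fin n → Letter → Fin n :=
  mkAut f (fun x => if x ∈ Sset ε f β then β x else c x)


theorem act_append {n : ℕ} {A : Type*} (δ : Fin n → A → Fin n) (w1 w2 : List A) (s : Fin n) :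
    act δ (w1 ++ w2) s = act δ w2 (act δ w1 s) := by
  induction w1 generalizing s with
  | nil => rfl
  | cons c w1 ih =>
      show act δ (w1 ++ w2) (δ s c) = act δ w2 (act δ w1 (δ s c))
      rw [ih]

theorem act_replicate {n : ℕ} {A : Type*} (δ : Fin n → A → Fin n) (l : A) (k : ℕ) (s : Fin n) :
    act δ (List.replicate k l) s = (fun x => δ x l)^[k] s := by
  induction k generalizing s with
  | zero => rfl
  | succ k ih =>
      rw [List.replicate_succ]
      show act δ (List.replicate k l) (δ s l) = _
      rw [ih, Function.iterate_succ_apply]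

theorem act_flatten_replicate {n : ℕ} {A : Type*} (δ : Fin n → A → Fin n) (L : List A) (k : ℕ)
    (s : Fin n) :
    act δ ((List.replicate k L).flatten) s = (act δ L)^[k] s := by
  induction k generalizing s with
  | zero => rfl
  | succ k ih =>
      rw [List.replicate_succ, List.flatten_cons, act_append, ih,
        Function.iterate_succ_apply]

theorem IsCyclicPt.apply {n : ℕ} {f : Fin n → Fin n} {x : Fin n} (h : IsCyclicPt f x) :
    IsCyclicPt f (f x) := by
  obtain ⟨i, hi, hx⟩ := h
  exact ⟨i, hi, by rw [← Function.iterate_succ_apply, Function.iterate_succ_apply', hx]⟩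

theorem IsCyclicPt.iterate {n : ℕ} {f : Fin n → Fin n} {x : Fin n} (h : IsCyclicPt f x) (k : ℕ) :
    IsCyclicPt f (f^[k] x) := by
  induction k with
  | zero => exact h
  | succ k ih => rw [Function.iterate_succ_apply']; exact ih.apply

theorem IsCyclicPt.iterate_self {n : ℕ} {f : Fin n → Fin n} {x : Fin n} {i : ℕ}
    (hx : f^[i] x = x) : ∀ t, f^[i * t] x = x := by
  intro t
  induction t with
  | zero => simp
  | succ t ih => rw [Nat.mul_succ, Function.iterate_add_apply, hx, ih]

/-- A map is injective on its cyclic points. -/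
theorem cyclic_inj {n : ℕ} {f : Fin n → Fin n} {x y : Fin n}
    (hx : IsCyclicPt f x) (hy : IsCyclicPt f y) (h : f x = f y) : x = y := by
  obtain ⟨i, hi, hxi⟩ := hx
  obtain ⟨j, hj, hyj⟩ := hy
  have hxi' : f^[i * j] x = x := IsCyclicPt.iterate_self hxi j
  have hyj' : f^[i * j] y = y := by rw [mul_comm]; exact IsCyclicPt.iterate_self hyj i
  have hij : 1 ≤ i * j := Nat.one_le_iff_ne_zero.2 (Nat.mul_ne_zero hi.ne' hj.ne')
  calc x = f^[i * j] x := hxi'.symm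
    _ = f^[i * j - 1] (f x) := by
        rw [← Function.iterate_succ_apply, Nat.succ_eq_add_one, Nat.sub_add_cancel hij]
    _ = f^[i * j - 1] (f y) := by rw [h]
    _ = f^[i * j] y := by
        rw [← Function.iterate_succ_apply, Nat.succ_eq_add_one, Nat.sub_add_cancel hij]
    _ = y := hyj'

theorem exists_cyclic_iterate {n : ℕ} (f : Fin n → Fin n) (x : Fin n) :
    ∃ i, IsCyclicPt f (f^[i] x) := by
  obtain ⟨i, j, hne, hij⟩ := Finite.exists_ne_map_eq_of_infinite (fun k : ℕ => f^[k] x)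
  rcases hne.lt_or_gt with hlt | hlt
  · exact ⟨i, ⟨j - i, by omega, by
      rw [← Function.iterate_add_apply, Nat.sub_add_cancel hlt.le, hij]⟩⟩
  · exact ⟨j, ⟨i - j, by omega, by
      rw [← Function.iterate_add_apply, Nat.sub_add_cancel hlt.le, ← hij]⟩⟩

theorem heightOf_spec {n : ℕ} (f : Fin n → Fin n) (x : Fin n) :
    IsCyclicPt f (f^[heightOf f x] x) :=
  Nat.sInf_mem (exists_cyclic_iterate f x)

theorem cyclic_iterate_of_heightOf_le {n : ℕ} {f : Fin n → Fin n} {x : Fin n} {k : ℕ}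
    (h : heightOf f x ≤ k) : IsCyclicPt f (f^[k] x) := by
  have := (heightOf_spec f x).iterate (k - heightOf f x)
  rwa [← Function.iterate_add_apply, Nat.sub_add_cancel h] at this

theorem heightOf_le_height {n : ℕ} (f : Fin n → Fin n) (x : Fin n) :
    heightOf f x ≤ height f :=
  Finset.le_sup (Finset.mem_univ x)

section WordLemmas

variable (ε : ℝ) {n : ℕ} (f β : Fin n → Fin n)

theorem cyclicPts_subset_Sset : cyclicPts f ⊆ Sset ε f β :=
  Finset.subset_union_left

theorem CycF_subset_cyclicPts : CycF ε f β ⊆ cyclicPts f :=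
  Finset.filter_subset _ _

theorem beta_mem_Sset {x : Fin n} (hx : x ∈ CycF ε f β) : β x ∈ Sset ε f β :=
  Finset.mem_union_right _ (Finset.mem_image_of_mem β hx)

theorem act_uWord (g : Fin n → Fin n) (s : Fin n) :
    act (mkAut f g) (uWord ε n) s = f^[alphaN ε n] s := by
  rw [uWord, act_replicate]; rfl

theorem mem_cyclicPts_iff {x : Fin n} : x ∈ cyclicPts f ↔ IsCyclicPt f x := by
  simp [cyclicPts]

theorem iterate_alpha_mem (hhf : height f ≤ alphaN ε n) (s : Fin n) :
    f^[alphaN ε n] s ∈ cyclicPts f := by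
  rw [mem_cyclicPts_iff]
  exact cyclic_iterate_of_heightOf_le ((heightOf_le_height f s).trans hhf)

theorem act_bu (g : Fin n → Fin n) (hg : ∀ x ∈ cyclicPts f, g x = β x)
    {x : Fin n} (hx : x ∈ cyclicPts f) :
    act (mkAut f g) (Letter.b :: uWord ε n) x = Fmap ε f β x := by
  show act (mkAut f g) (uWord ε n) (g x) = _
  rw [act_uWord, hg x hx]; rfl

theorem iter_bu (g : Fin n → Fin n) (hg : ∀ x ∈ cyclicPts f, g x = β x)
    (hFclo : ∀ x ∈ cyclicPts f, Fmap ε f β x ∈ cyclicPts f) (k : ℕ)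
    {x : Fin n} (hx : x ∈ cyclicPts f) :
    (act (mkAut f g) (Letter.b :: uWord ε n))^[k] x = (Fmap ε f β)^[k] x ∧
      (Fmap ε f β)^[k] x ∈ cyclicPts f := by
  induction k with
  | zero => exact ⟨rfl, hx⟩
  | succ k ih =>
      obtain ⟨h1, h2⟩ := ih
      refine ⟨?_, ?_⟩
      · rw [Function.iterate_succ_apply', Function.iterate_succ_apply', h1,
          act_bu ε f β g hg h2]
      · rw [Function.iterate_succ_apply']
        exact hFclo _ h2

theorem act_vWord (g : Fin n → Fin n) (hg : ∀ x ∈ cyclicPts f, g x = β x)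
    (hhf : height f ≤ alphaN ε n)
    (hFclo : ∀ x ∈ cyclicPts f, Fmap ε f β x ∈ cyclicPts f) (s : Fin n) :
    act (mkAut f g) (vWord ε n) s = (Fmap ε f β)^[betaN ε n] (f^[alphaN ε n] s) := by
  rw [vWord, act_append, act_uWord, act_flatten_replicate]
  exact (iter_bu ε f β g hg hFclo _ (iterate_alpha_mem ε f hhf s)).1

theorem iter_Fmap_mem (hFclo : ∀ x ∈ cyclicPts f, Fmap ε f β x ∈ cyclicPts f) (k : ℕ)
    {x : Fin n} (hx : x ∈ cyclicPts f) : (Fmap ε f β)^[k] x ∈ cyclicPts f := by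
  induction k with
  | zero => exact hx
  | succ k ih => rw [Function.iterate_succ_apply']; exact hFclo _ ih

theorem Vfun_mem_CycF (hhf : height f ≤ alphaN ε n)
    (hFclo : ∀ x ∈ cyclicPts f, Fmap ε f β x ∈ cyclicPts f)
    (hFh : (cyclicPts f).sup (heightOf (Fmap ε f β)) ≤ betaN ε n) (s : Fin n) :
    (Fmap ε f β)^[betaN ε n] (f^[alphaN ε n] s) ∈ CycF ε f β := by
  have hy := iterate_alpha_mem ε f hhf s
  rw [CycF, Finset.mem_filter]
  refine ⟨iter_Fmap_mem ε f β hFclo _ hy, ?_⟩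
  exact cyclic_iterate_of_heightOf_le ((Finset.le_sup hy).trans hFh)

theorem act_bbv (g : Fin n → Fin n) (hg' : ∀ x ∈ Sset ε f β, g x = β x)
    (hhf : height f ≤ alphaN ε n)
    (hFclo : ∀ x ∈ cyclicPts f, Fmap ε f β x ∈ cyclicPts f)
    {x : Fin n} (hx : x ∈ CycF ε f β) :
    act (mkAut f g) (Letter.b :: Letter.b :: vWord ε n) x = Gmap ε f β x := by
  have hg : ∀ y ∈ cyclicPts f, g y = β y := fun y hy =>
    hg' y (cyclicPts_subset_Sset ε f β hy)
  have hx1 : x ∈ Sset ε f β := cyclicPts_subset_Sset ε f β (CycF_subset_cyclicPts ε f β hx)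
  show act (mkAut f g) (vWord ε n) (g (g x)) = Gmap ε f β x
  rw [hg' x hx1, hg' (β x) (beta_mem_Sset ε f β hx)]
  rw [act_vWord ε f β g hg hhf hFclo, Gmap,
    act_vWord ε f β β (fun _ _ => rfl) hhf hFclo]

theorem iter_bbv (g : Fin n → Fin n) (hg' : ∀ x ∈ Sset ε f β, g x = β x)
    (hhf : height f ≤ alphaN ε n)
    (hFclo : ∀ x ∈ cyclicPts f, Fmap ε f β x ∈ cyclicPts f)
    (hGclo : ∀ x ∈ CycF ε f β, Gmap ε f β x ∈ CycF ε f β) (k : ℕ)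
    {x : Fin n} (hx : x ∈ CycF ε f β) :
    (act (mkAut f g) (Letter.b :: Letter.b :: vWord ε n))^[k] x = (Gmap ε f β)^[k] x ∧
      (Gmap ε f β)^[k] x ∈ CycF ε f β := by
  induction k with
  | zero => exact ⟨rfl, hx⟩
  | succ k ih =>
      obtain ⟨h1, h2⟩ := ih
      constructor
      · rw [Function.iterate_succ_apply', Function.iterate_succ_apply', h1,
          act_bbv ε f β g hg' hhf hFclo h2]
      · rw [Function.iterate_succ_apply']
        exact hGclo _ h2

/-- The deterministic map computed by reading `w_n`, irrespective of the random
completion. -/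
noncomputable def Wfix (ε : ℝ) {n : ℕ} (f β : Fin n → Fin n) : Fin n → Fin n :=
  fun s => (Gmap ε f β)^[gammaN ε n] ((Fmap ε f β)^[betaN ε n] (f^[alphaN ε n] s))

theorem act_wWord (g : Fin n → Fin n) (hg' : ∀ x ∈ Sset ε f β, g x = β x)
    (hhf : height f ≤ alphaN ε n)
    (hFclo : ∀ x ∈ cyclicPts f, Fmap ε f β x ∈ cyclicPts f)
    (hFh : (cyclicPts f).sup (heightOf (Fmap ε f β)) ≤ betaN ε n)
    (hGclo : ∀ x ∈ CycF ε f β, Gmap ε f β x ∈ CycF ε f β) (s : Fin n) :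
    act (mkAut f g) (wWord ε n) s = Wfix ε f β s := by
  have hg : ∀ y ∈ cyclicPts f, g y = β y := fun y hy =>
    hg' y (cyclicPts_subset_Sset ε f β hy)
  rw [wWord, act_append, act_flatten_replicate, act_vWord ε f β g hg hhf hFclo, Wfix]
  exact (iter_bbv ε f β g hg' hhf hFclo hGclo _
    (Vfun_mem_CycF ε f β hhf hFclo hFh s)).1

theorem iter_Gmap_mem (hGclo : ∀ x ∈ CycF ε f β, Gmap ε f β x ∈ CycF ε f β) (k : ℕ)
    {x : Fin n} (hx : x ∈ CycF ε f β) : (Gmap ε f β)^[k] x ∈ CycF ε f β := by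
  induction k with
  | zero => exact hx
  | succ k ih => rw [Function.iterate_succ_apply']; exact hGclo _ ih

theorem Wfix_mem_CycG (hhf : height f ≤ alphaN ε n)
    (hFclo : ∀ x ∈ cyclicPts f, Fmap ε f β x ∈ cyclicPts f)
    (hFh : (cyclicPts f).sup (heightOf (Fmap ε f β)) ≤ betaN ε n)
    (hGclo : ∀ x ∈ CycF ε f β, Gmap ε f β x ∈ CycF ε f β)
    (hGh : (CycF ε f β).sup (heightOf (Gmap ε f β)) ≤ gammaN ε n) (s : Fin n) :
    Wfix ε f β s ∈ (CycF ε f β).filter (IsCyclicPt (Gmap ε f β)) := by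
  have hy := Vfun_mem_CycF ε f β hhf hFclo hFh s
  rw [Finset.mem_filter]
  exact ⟨iter_Gmap_mem ε f β hGclo _ hy,
    cyclic_iterate_of_heightOf_le ((Finset.le_sup hy).trans hGh)⟩

end WordLemmas

section Core

variable {n : ℕ} (S : Finset (Fin n)) (β : Fin n → Fin n) (x0 y0 : Fin n)

/-- The `b`-transition map obtained by extending `β` (on `S`) by `c` (off `S`). -/
def bstep (c : Fin n → Fin n) : Fin n → Fin n := fun x => if x ∈ S then β x else c x

/-- The chain started at `x0`. -/
def chX (c : Fin n → Fin n) (k : ℕ) : Fin n := (bstep S β c)^[k] x0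

/-- The chain started at `y0`. -/
def chY (c : Fin n → Fin n) (k : ℕ) : Fin n := (bstep S β c)^[k] y0

/-- The set of points visited by either chain before time `k`. -/
def prevT (c : Fin n → Fin n) (k : ℕ) : Finset (Fin n) :=
  ((Finset.range k).image (chX S β x0 c)) ∪ ((Finset.range k).image (chY S β y0 c))

/-- Step `k` is "good": both chains are outside `S`, fresh, and distinct. -/
def GoodT (c : Fin n → Fin n) (k : ℕ) : Prop :=
  chX S β x0 c k ∉ S ∧ chY S β y0 c k ∉ S ∧
  chX S β x0 c k ∉ prevT S β x0 y0 c k ∧ chY S β y0 c k ∉ prevT S β x0 y0 c k ∧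
  chX S β x0 c k ≠ chY S β y0 c k

variable (W : Fin n → Fin n)

/-- No `W`-synchronization at time `k`. -/
def NS (c : Fin n → Fin n) (k : ℕ) : Prop :=
  W (chX S β x0 c k) ≠ W (chY S β y0 c k)

/-- The set of `c` whose first `k` steps are all good and non-synchronizing. -/
noncomputable def Dset (k : ℕ) : Finset (Fin n → Fin n) :=
  Finset.univ.filter (fun c => ∀ i ≤ k, GoodT S β x0 y0 c i ∧ NS S β x0 y0 W c i)

/-- The set of `c` which are good and non-synchronizing before time `t`, and bad at `t`. -/
noncomputable def Cset (t : ℕ) : Finset (Fin n → Fin n) :=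
  Finset.univ.filter (fun c =>
      (∀ i < t, GoodT S β x0 y0 c i ∧ NS S β x0 y0 W c i) ∧ ¬ GoodT S β x0 y0 c t)

theorem mem_Dset {c : Fin n → Fin n} {k : ℕ} :
    c ∈ Dset S β x0 y0 W k ↔ ∀ i ≤ k, GoodT S β x0 y0 c i ∧ NS S β x0 y0 W c i := by
  rw [Dset, Finset.mem_filter]
  exact ⟨fun h => h.2, fun h => ⟨Finset.mem_univ _, h⟩⟩

theorem mem_Cset {c : Fin n → Fin n} {t : ℕ} :
    c ∈ Cset S β x0 y0 W t ↔
      (∀ i < t, GoodT S β x0 y0 c i ∧ NS S β x0 y0 W c i) ∧ ¬ GoodT S β x0 y0 c t := by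
  rw [Cset, Finset.mem_filter]
  exact ⟨fun h => h.2, fun h => ⟨Finset.mem_univ _, h⟩⟩

theorem chX_succ (c : Fin n → Fin n) (k : ℕ) :
    chX S β x0 c (k+1) = bstep S β c (chX S β x0 c k) :=
  Function.iterate_succ_apply' _ _ _

theorem chY_succ (c : Fin n → Fin n) (k : ℕ) :
    chY S β y0 c (k+1) = bstep S β c (chY S β y0 c k) :=
  Function.iterate_succ_apply' _ _ _

theorem mem_prevT_X {c : Fin n → Fin n} {i k : ℕ} (h : i < k) :
    chX S β x0 c i ∈ prevT S β x0 y0 c k :=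
  Finset.mem_union_left _ (Finset.mem_image_of_mem _ (Finset.mem_range.2 h))

theorem mem_prevT_Y {c : Fin n → Fin n} {i k : ℕ} (h : i < k) :
    chY S β y0 c i ∈ prevT S β x0 y0 c k :=
  Finset.mem_union_right _ (Finset.mem_image_of_mem _ (Finset.mem_range.2 h))

theorem prevT_card (c : Fin n → Fin n) (k : ℕ) : (prevT S β x0 y0 c k).card ≤ 2 * k := by
  refine (Finset.card_union_le _ _).trans ?_
  have h1 := Finset.card_image_le (s := Finset.range k) (f := chX S β x0 c)
  have h2 := Finset.card_image_le (s := Finset.range k) (f := chY S β y0 c)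
  rw [Finset.card_range] at h1 h2
  omega

/-- Trajectory stability: modifying `c` at the two current (fresh) points does not
change the trajectory up to the current time. -/
theorem chain_congr {c c' : Fin n → Fin n} {k : ℕ}
    (hg : ∀ i < k, GoodT S β x0 y0 c i)
    (hu : chX S β x0 c k ∉ prevT S β x0 y0 c k)
    (hv : chY S β y0 c k ∉ prevT S β x0 y0 c k)
    (hcc : ∀ x, x ≠ chX S β x0 c k → x ≠ chY S β y0 c k → c' x = c x) :
    ∀ i ≤ k, chX S β x0 c' i = chX S β x0 c i ∧ chY S β y0 c' i = chY S β y0 c i := by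
  intro i hik
  induction i with
  | zero => exact ⟨rfl, rfl⟩
  | succ i ih =>
      obtain ⟨h1, h2⟩ := ih (Nat.le_of_succ_le hik)
      have hilt : i < k := hik
      have hgi := hg i hilt
      constructor
      · rw [chX_succ, chX_succ, h1, bstep, bstep]
        rw [if_neg hgi.1, if_neg hgi.1]
        refine hcc _ (fun h => hu ?_) (fun h => hv ?_)
        · exact h ▸ mem_prevT_X S β x0 y0 hilt
        · exact h ▸ mem_prevT_X S β x0 y0 hilt
      · rw [chY_succ, chY_succ, h2, bstep, bstep]
        rw [if_neg hgi.2.1, if_neg hgi.2.1]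
        refine hcc _ (fun h => hu ?_) (fun h => hv ?_)
        · exact h ▸ mem_prevT_Y S β x0 y0 hilt
        · exact h ▸ mem_prevT_Y S β x0 y0 hilt

theorem prev_congr {c c' : Fin n → Fin n} {k : ℕ}
    (hch : ∀ i ≤ k, chX S β x0 c' i = chX S β x0 c i ∧ chY S β y0 c' i = chY S β y0 c i) :
    ∀ i ≤ k + 1, prevT S β x0 y0 c' i = prevT S β x0 y0 c i := by
  intro i hi
  unfold prevT
  congr 1
  · refine Finset.image_congr fun j hj => ?_
    simp only [Finset.coe_range, Set.mem_Iio] at hj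
    exact (hch j (by omega)).1
  · refine Finset.image_congr fun j hj => ?_
    simp only [Finset.coe_range, Set.mem_Iio] at hj
    exact (hch j (by omega)).2

theorem Good_congr {c c' : Fin n → Fin n} {k : ℕ}
    (hch : ∀ i ≤ k, chX S β x0 c' i = chX S β x0 c i ∧ chY S β y0 c' i = chY S β y0 c i) :
    ∀ i ≤ k, (GoodT S β x0 y0 c' i ↔ GoodT S β x0 y0 c i) := by
  intro i hi
  unfold GoodT
  rw [(hch i hi).1, (hch i hi).2, prev_congr S β x0 y0 hch i (hi.trans (Nat.le_succ k))]

theorem Dmem_congr {c c' : Fin n → Fin n} {k : ℕ}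
    (hch : ∀ i ≤ k, chX S β x0 c' i = chX S β x0 c i ∧ chY S β y0 c' i = chY S β y0 c i)
    (hc : c ∈ Dset S β x0 y0 W k) : c' ∈ Dset S β x0 y0 W k := by
  rw [mem_Dset] at hc ⊢
  intro i hi
  refine ⟨(Good_congr S β x0 y0 hch i hi).2 (hc i hi).1, ?_⟩
  unfold NS
  rw [(hch i hi).1, (hch i hi).2]
  exact (hc i hi).2

end Core

section Core2

variable {n : ℕ} (S : Finset (Fin n)) (β : Fin n → Fin n) (x0 y0 : Fin n)
variable (W : Fin n → Fin n)

/-- Resampling `c` at the two current points preserves membership in `Dset k` and the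
trajectory (including the visited sets one step further). -/
theorem upd_lemma {c : Fin n → Fin n} {k : ℕ} (hc : c ∈ Dset S β x0 y0 W k) (a b : Fin n) :
    (∀ i ≤ k,
      chX S β x0 (Function.update (Function.update c (chX S β x0 c k) a) (chY S β y0 c k) b) i
        = chX S β x0 c i ∧
      chY S β y0 (Function.update (Function.update c (chX S β x0 c k) a) (chY S β y0 c k) b) i
        = chY S β y0 c i) ∧
    Function.update (Function.update c (chX S β x0 c k) a) (chY S β y0 c k) b
      ∈ Dset S β x0 y0 W k ∧
    prevT S β x0 y0
        (Function.update (Function.update c (chX S β x0 c k) a) (chY S β y0 c k) b) (k+1)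
      = prevT S β x0 y0 c (k+1) := by
  have hGood : ∀ i ≤ k, GoodT S β x0 y0 c i := fun i hi => ((mem_Dset _ _ _ _ _).1 hc i hi).1
  have hGk := hGood k le_rfl
  have hcc : ∀ x, x ≠ chX S β x0 c k → x ≠ chY S β y0 c k →
      (Function.update (Function.update c (chX S β x0 c k) a) (chY S β y0 c k) b) x = c x := by
    intro x hx hy
    rw [Function.update_of_ne hy, Function.update_of_ne hx]
  have hch := chain_congr S β x0 y0 (fun i hi => hGood i hi.le) hGk.2.2.1 hGk.2.2.2.1 hcc
  exact ⟨hch, Dmem_congr S β x0 y0 W hch hc, prev_congr S β x0 y0 hch (k+1) le_rfl⟩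

theorem upd_recover {c : Fin n → Fin n} {u v : Fin n} (huv : u ≠ v) (a b : Fin n) :
    Function.update (Function.update (Function.update (Function.update c u a) v b) u (c u))
      v (c v) = c := by
  funext x
  rcases eq_or_ne x v with rfl | hxv
  · rw [Function.update_self]
  · rw [Function.update_of_ne hxv]
    rcases eq_or_ne x u with rfl | hxu
    · rw [Function.update_self]
    · rw [Function.update_of_ne hxu, Function.update_of_ne hxv, Function.update_of_ne hxu]

theorem upd_eval_u {c : Fin n → Fin n} {u v : Fin n} (huv : u ≠ v) (a b : Fin n) :
    (Function.update (Function.update c u a) v b) u = a := by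
  rw [Function.update_of_ne huv, Function.update_self]

theorem upd_eval_v {c : Fin n → Fin n} {u v : Fin n} (a b : Fin n) :
    (Function.update (Function.update c u a) v b) v = b := by
  rw [Function.update_self]

/-- The value of the `x`-chain at time `k+1`, when step `k` is good. -/
theorem chX_succ_eval {c : Fin n → Fin n} {k : ℕ} (h : chX S β x0 c k ∉ S) :
    chX S β x0 c (k+1) = c (chX S β x0 c k) := by
  rw [chX_succ, bstep, if_neg h]

theorem chY_succ_eval {c : Fin n → Fin n} {k : ℕ} (h : chY S β y0 c k ∉ S) :
    chY S β y0 c (k+1) = c (chY S β y0 c k) := by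
  rw [chY_succ, bstep, if_neg h]

/-- The resampling map. -/
def Phi (k : ℕ) : ((Fin n → Fin n) × (Fin n × Fin n)) → ((Fin n → Fin n) × (Fin n × Fin n)) :=
  fun z => (Function.update (Function.update z.1 (chX S β x0 z.1 k) z.2.1)
              (chY S β y0 z.1 k) z.2.2,
            (z.1 (chX S β x0 z.1 k), z.1 (chY S β y0 z.1 k)))

theorem Phi_injOn (k : ℕ) :
    Set.InjOn (Phi S β x0 y0 k)
      (((Dset S β x0 y0 W k) ×ˢ ((Finset.univ : Finset (Fin n)) ×ˢ Finset.univ) :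
        Finset ((Fin n → Fin n) × Fin n × Fin n)) :
          Set ((Fin n → Fin n) × Fin n × Fin n)) := by
  rintro ⟨c1, a1, b1⟩ hz1 ⟨c2, a2, b2⟩ hz2 heq
  rw [Finset.coe_product, Set.mem_prod] at hz1 hz2
  have hc1 : c1 ∈ Dset S β x0 y0 W k := hz1.1
  have hc2 : c2 ∈ Dset S β x0 y0 W k := hz2.1
  have hne1 : chX S β x0 c1 k ≠ chY S β y0 c1 k :=
    (((mem_Dset _ _ _ _ _).1 hc1 k le_rfl).1).2.2.2.2
  have hne2 : chX S β x0 c2 k ≠ chY S β y0 c2 k :=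
    (((mem_Dset _ _ _ _ _).1 hc2 k le_rfl).1).2.2.2.2
  have h1 := upd_lemma S β x0 y0 W hc1 a1 b1
  have h2 := upd_lemma S β x0 y0 W hc2 a2 b2
  simp only [Phi, Prod.mk.injEq] at heq
  obtain ⟨he, hs, ht⟩ := heq
  -- the modified function
  set e := Function.update (Function.update c1 (chX S β x0 c1 k) a1) (chY S β y0 c1 k) b1
    with hedef
  -- its chain values at time k agree with those of both c1 and c2
  have e1 : chX S β x0 e k = chX S β x0 c1 k := (h1.1 k le_rfl).1
  have f1 : chY S β y0 e k = chY S β y0 c1 k := (h1.1 k le_rfl).2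
  have e2 := (h2.1 k le_rfl).1
  have f2 := (h2.1 k le_rfl).2
  rw [← he] at e2 f2
  have hu12 : chX S β x0 c1 k = chX S β x0 c2 k := e1.symm.trans e2
  have hv12 : chY S β y0 c1 k = chY S β y0 c2 k := f1.symm.trans f2
  have hc12 : c1 = c2 := by
    have r1 := upd_recover hne1 a1 b1 (c := c1)
    rw [← hedef] at r1
    have r2 := upd_recover hne2 a2 b2 (c := c2)
    rw [← he, ← hs, ← ht, ← hu12, ← hv12] at r2
    rw [← r1, r2]
  have ha : a1 = a2 := by
    have q1 : e (chX S β x0 c1 k) = a1 := by rw [hedef]; exact upd_eval_u hne1 a1 b1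
    have q2 := upd_eval_u hne2 a2 b2 (c := c2)
    rw [← he, ← hu12] at q2
    exact q1.symm.trans q2
  have hb : b1 = b2 := by
    have q1 : e (chY S β y0 c1 k) = b1 := by rw [hedef]; exact upd_eval_v a1 b1
    have q2 := upd_eval_v (c := c2) (u := chX S β x0 c2 k) (v := chY S β y0 c2 k) a2 b2
    rw [← he, ← hv12] at q2
    exact q1.symm.trans q2
  exact Prod.ext hc12 (Prod.ext ha hb)

theorem Dset_antitone {k l : ℕ} (h : k ≤ l) :
    Dset S β x0 y0 W l ⊆ Dset S β x0 y0 W k := fun c hc =>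
  (mem_Dset _ _ _ _ _).2 fun i hi => (mem_Dset _ _ _ _ _).1 hc i (hi.trans h)

theorem Cset_subset_Dset {k : ℕ} :
    Cset S β x0 y0 W (k+1) ⊆ Dset S β x0 y0 W k := fun c hc =>
  (mem_Dset _ _ _ _ _).2 fun i hi =>
    ((mem_Cset _ _ _ _ _).1 hc).1 i (Nat.lt_succ_of_le hi)

/-- The main step estimate for `Dset`. -/
theorem Dstep (k : ℕ) :
    (Dset S β x0 y0 W (k+1)).card * (n * n) ≤
      (Dset S β x0 y0 W k).card *
        (((Finset.univ : Finset (Fin n)) ×ˢ Finset.univ).filter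
          (fun st : Fin n × Fin n => W st.1 ≠ W st.2)).card := by
  have hmaps : ∀ z ∈ (Dset S β x0 y0 W (k+1)) ×ˢ
      ((Finset.univ : Finset (Fin n)) ×ˢ Finset.univ),
      Phi S β x0 y0 k z ∈ (Dset S β x0 y0 W k) ×ˢ
        (((Finset.univ : Finset (Fin n)) ×ˢ Finset.univ).filter
          (fun st : Fin n × Fin n => W st.1 ≠ W st.2)) := by
    rintro ⟨c, a, b⟩ hz
    rw [Finset.mem_product] at hz
    have hc1 : c ∈ Dset S β x0 y0 W (k+1) := hz.1
    have hck : c ∈ Dset S β x0 y0 W k := Dset_antitone S β x0 y0 W (Nat.le_succ k) hc1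
    have hGk := ((mem_Dset _ _ _ _ _).1 hck k le_rfl).1
    have h1 := upd_lemma S β x0 y0 W hck a b
    rw [Finset.mem_product]
    constructor
    · exact h1.2.1
    · rw [Finset.mem_filter]
      refine ⟨Finset.mem_product.2 ⟨Finset.mem_univ _, Finset.mem_univ _⟩, ?_⟩
      have hns := ((mem_Dset _ _ _ _ _).1 hc1 (k+1) le_rfl).2
      unfold NS at hns
      rwa [chX_succ_eval S β x0 hGk.1, chY_succ_eval S β y0 hGk.2.1] at hns
  have hinj : Set.InjOn (Phi S β x0 y0 k)
      (((Dset S β x0 y0 W (k+1)) ×ˢ ((Finset.univ : Finset (Fin n)) ×ˢ Finset.univ) :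
        Finset ((Fin n → Fin n) × Fin n × Fin n)) :
          Set ((Fin n → Fin n) × Fin n × Fin n)) := by
    refine (Phi_injOn S β x0 y0 W k).mono ?_
    rw [Finset.coe_subset]
    exact Finset.product_subset_product_left (Dset_antitone S β x0 y0 W (Nat.le_succ k))
  have key := Finset.card_le_card_of_injOn _ hmaps hinj
  rwa [Finset.card_product, Finset.card_product, Finset.card_product, Finset.card_univ,
    Fintype.card_fin] at key

end Core2

section Core3

variable {n : ℕ} (S : Finset (Fin n)) (β : Fin n → Fin n) (x0 y0 : Fin n)
variable (W : Fin n → Fin n)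

theorem diag_card :
    ((((Finset.univ : Finset (Fin n)) ×ˢ Finset.univ)).filter
      (fun p : Fin n × Fin n => p.1 = p.2)).card ≤ n := by
  have h := Finset.card_le_card_of_injOn
    (s := (((Finset.univ : Finset (Fin n)) ×ˢ Finset.univ)).filter
      (fun p : Fin n × Fin n => p.1 = p.2))
    (t := (Finset.univ : Finset (Fin n)))
    (fun p : Fin n × Fin n => p.1) (fun p _ => Finset.mem_univ p.1) ?_
  · rwa [Finset.card_univ, Fintype.card_fin] at h
  · rintro ⟨a, b⟩ ha ⟨c, d⟩ hc (h : a = c)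
    have hab : a = b := (Finset.mem_filter.1 ha).2
    have hcd : c = d := (Finset.mem_filter.1 hc).2
    simp only [Prod.mk.injEq]
    exact ⟨h, by rw [← hab, ← hcd, h]⟩

theorem Cstep (k m : ℕ) (hk : k + 1 ≤ m) :
    (Cset S β x0 y0 W (k+1)).card * (n * n) ≤
      (Dset S β x0 y0 W k).card * (n * (2 * S.card + 4 * m + 1)) := by
  set Tset : Finset ((Fin n → Fin n) × (Fin n × Fin n)) :=
    ((Dset S β x0 y0 W k) ×ˢ ((Finset.univ : Finset (Fin n)) ×ˢ Finset.univ)).filter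
      (fun z => z.2.1 ∈ S ∪ prevT S β x0 y0 z.1 (k+1) ∨
                z.2.2 ∈ S ∪ prevT S β x0 y0 z.1 (k+1) ∨ z.2.1 = z.2.2) with hT
  have step1 : (Cset S β x0 y0 W (k+1)).card * (n * n) ≤ Tset.card := by
    have hmaps : ∀ z ∈ (Cset S β x0 y0 W (k+1)) ×ˢ
        ((Finset.univ : Finset (Fin n)) ×ˢ Finset.univ), Phi S β x0 y0 k z ∈ Tset := by
      rintro ⟨c, a, b⟩ hz
      rw [Finset.mem_product] at hz
      have hcC : c ∈ Cset S β x0 y0 W (k+1) := hz.1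
      have hcD : c ∈ Dset S β x0 y0 W k := Cset_subset_Dset S β x0 y0 W hcC
      have hGk := ((mem_Dset _ _ _ _ _).1 hcD k le_rfl).1
      have h1 := upd_lemma S β x0 y0 W hcD a b
      have hbad := ((mem_Cset _ _ _ _ _).1 hcC).2
      rw [hT, Finset.mem_filter]
      refine ⟨Finset.mem_product.2 ⟨h1.2.1,
        Finset.mem_product.2 ⟨Finset.mem_univ _, Finset.mem_univ _⟩⟩, ?_⟩
      by_contra hP
      push_neg at hP
      obtain ⟨hP1, hP2, hP3⟩ := hP
      simp only [Phi] at hP1 hP2 hP3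
      rw [h1.2.2, Finset.mem_union] at hP1 hP2
      push_neg at hP1 hP2
      refine hbad ⟨?_, ?_, ?_, ?_, ?_⟩
      · rw [chX_succ_eval S β x0 hGk.1]; exact hP1.1
      · rw [chY_succ_eval S β y0 hGk.2.1]; exact hP2.1
      · rw [chX_succ_eval S β x0 hGk.1]; exact hP1.2
      · rw [chY_succ_eval S β y0 hGk.2.1]; exact hP2.2
      · rw [chX_succ_eval S β x0 hGk.1, chY_succ_eval S β y0 hGk.2.1]; exact hP3
    have hinj : Set.InjOn (Phi S β x0 y0 k)
        (((Cset S β x0 y0 W (k+1)) ×ˢ ((Finset.univ : Finset (Fin n)) ×ˢ Finset.univ) :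
          Finset ((Fin n → Fin n) × Fin n × Fin n)) :
            Set ((Fin n → Fin n) × Fin n × Fin n)) := by
      refine (Phi_injOn S β x0 y0 W k).mono ?_
      rw [Finset.coe_subset]
      exact Finset.product_subset_product_left (Cset_subset_Dset S β x0 y0 W)
    have key := Finset.card_le_card_of_injOn _ hmaps hinj
    rwa [Finset.card_product, Finset.card_product, Finset.card_univ, Fintype.card_fin] at key
  have step2 : Tset.card ≤ (Dset S β x0 y0 W k).card * (n * (2 * S.card + 4 * m + 1)) := by
    rw [Finset.card_eq_sum_card_fiberwise
      (f := fun z : (Fin n → Fin n) × (Fin n × Fin n) => z.1) (t := Dset S β x0 y0 W k)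
      (fun z hz => (Finset.mem_product.1 (Finset.mem_filter.1 hz).1).1)]
    have hfib : ∀ e ∈ Dset S β x0 y0 W k,
        (Tset.filter (fun z => z.1 = e)).card ≤ n * (2 * S.card + 4 * m + 1) := by
      intro e _
      set A : Finset (Fin n) := S ∪ prevT S β x0 y0 e (k+1) with hA
      have hinj2 := Finset.card_le_card_of_injOn
        (fun z : (Fin n → Fin n) × (Fin n × Fin n) => z.2)
        (s := Tset.filter (fun z => z.1 = e))
        (t := (A ×ˢ Finset.univ) ∪ (Finset.univ ×ˢ A) ∪
          (((Finset.univ : Finset (Fin n)) ×ˢ Finset.univ).filter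
            (fun p : Fin n × Fin n => p.1 = p.2))) ?_ ?_
      · refine hinj2.trans ?_
        have hAcard : A.card ≤ S.card + 2 * (k + 1) := by
          refine (Finset.card_union_le _ _).trans ?_
          have := prevT_card S β x0 y0 e (k+1)
          omega
        have c1 : ((A ×ˢ Finset.univ) ∪ (Finset.univ ×ˢ A) ∪
            (((Finset.univ : Finset (Fin n)) ×ˢ Finset.univ).filter
              (fun p : Fin n × Fin n => p.1 = p.2))).card ≤
            A.card * n + n * A.card + n := by
          refine (Finset.card_union_le _ _).trans ?_
          have h3 := diag_card (n := n)
          have h12 : ((A ×ˢ Finset.univ) ∪ (Finset.univ ×ˢ A)).card ≤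
              A.card * n + n * A.card := by
            refine (Finset.card_union_le _ _).trans ?_
            rw [Finset.card_product, Finset.card_product, Finset.card_univ, Fintype.card_fin]
          omega
        refine c1.trans ?_
        have hAm : A.card ≤ S.card + 2 * m := by omega
        nlinarith
      · rintro ⟨c, st⟩ hz
        have hz1 := Finset.mem_filter.1 hz
        have hze : c = e := hz1.2
        have hzT := Finset.mem_filter.1 hz1.1
        rcases hzT.2 with h | h | h
        · exact Finset.mem_union_left _ (Finset.mem_union_left _
            (Finset.mem_product.2 ⟨by rw [hA, ← hze]; exact h, Finset.mem_univ _⟩))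
        · exact Finset.mem_union_left _ (Finset.mem_union_right _
            (Finset.mem_product.2 ⟨Finset.mem_univ _, by rw [hA, ← hze]; exact h⟩))
        · exact Finset.mem_union_right _ (Finset.mem_filter.2
            ⟨Finset.mem_product.2 ⟨Finset.mem_univ _, Finset.mem_univ _⟩, h⟩)
      · rintro ⟨c1, st1⟩ h1 ⟨c2, st2⟩ h2 (h : st1 = st2)
        have e1 : c1 = e := (Finset.mem_filter.1 h1).2
        have e2 : c2 = e := (Finset.mem_filter.1 h2).2
        rw [Prod.mk.injEq]
        exact ⟨e1.trans e2.symm, h⟩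
    calc ∑ e ∈ Dset S β x0 y0 W k, (Tset.filter (fun z => z.1 = e)).card
        ≤ ∑ e ∈ Dset S β x0 y0 W k, n * (2 * S.card + 4 * m + 1) :=
          Finset.sum_le_sum hfib
      _ = (Dset S β x0 y0 W k).card * (n * (2 * S.card + 4 * m + 1)) := by
          rw [Finset.sum_const, smul_eq_mul]
  exact step1.trans step2

end Core3

section Core4

variable {n : ℕ} (S : Finset (Fin n)) (β : Fin n → Fin n) (x0 y0 : Fin n) (W : Fin n → Fin n)

theorem eq_pairs_card :
    n^2 ≤ (Finset.univ.image W).card *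
      ((((Finset.univ : Finset (Fin n)) ×ˢ Finset.univ)).filter
        (fun st : Fin n × Fin n => W st.1 = W st.2)).card := by
  classical
  set Im := Finset.univ.image W with hIm
  set fib : Fin n → ℕ := fun z => (Finset.univ.filter (fun s => W s = z)).card with hfib
  have hsum : ∑ z ∈ Im, fib z = n := by
    rw [← Finset.card_eq_sum_card_fiberwise
      (f := W) (s := Finset.univ) (t := Im) (fun x _ => Finset.mem_image_of_mem W
        (Finset.mem_univ x)), Finset.card_univ, Fintype.card_fin]
  have hEq : ((((Finset.univ : Finset (Fin n)) ×ˢ Finset.univ)).filter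
      (fun st : Fin n × Fin n => W st.1 = W st.2)).card = ∑ z ∈ Im, fib z * fib z := by
    rw [Finset.card_eq_sum_card_fiberwise
      (f := fun st : Fin n × Fin n => W st.1) (t := Im)
      (fun x hx => Finset.mem_image_of_mem W (Finset.mem_univ x.1))]
    refine Finset.sum_congr rfl fun z _ => ?_
    have : ((((Finset.univ : Finset (Fin n)) ×ˢ Finset.univ)).filter
        (fun st : Fin n × Fin n => W st.1 = W st.2)).filter
          (fun st : Fin n × Fin n => W st.1 = z) =
        (Finset.univ.filter (fun s => W s = z)) ×ˢ (Finset.univ.filter (fun s => W s = z)) := by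
      ext ⟨s, t⟩
      simp only [Finset.mem_filter, Finset.mem_product, Finset.mem_univ, true_and]
      constructor
      · rintro ⟨hst, hz⟩
        exact ⟨hz, hst ▸ hz⟩
      · rintro ⟨hs, ht⟩
        exact ⟨hs.trans ht.symm, hs⟩
    rw [this, Finset.card_product]
  have hCS := Finset.sum_mul_sq_le_sq_mul_sq Im fib (fun _ => 1)
  simp only [mul_one, one_pow, Finset.sum_const, smul_eq_mul, mul_one] at hCS
  calc n^2 = (∑ z ∈ Im, fib z)^2 := by rw [hsum]
    _ ≤ (∑ z ∈ Im, fib z ^ 2) * Im.card := hCS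
    _ = Im.card * ∑ z ∈ Im, fib z * fib z := by
        rw [mul_comm]; congr 1; exact Finset.sum_congr rfl fun z _ => pow_two (fib z)
    _ = _ := by rw [hEq]

theorem Dcard_le (hn : 0 < n) {γ : ℕ} (hγ : 1 ≤ γ)
    (hIm : (Finset.univ.image W).card ≤ γ) (k : ℕ) :
    ((Dset S β x0 y0 W k).card : ℝ) ≤ (1 - 1/(γ:ℝ))^k * ((n:ℝ)^(n:ℕ)) := by
  have hγR : (1:ℝ) ≤ (γ:ℝ) := by exact_mod_cast hγ
  have hγpos : (0:ℝ) < γ := by linarith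
  have hr0 : (0:ℝ) ≤ 1 - 1/(γ:ℝ) := by
    have : 1/(γ:ℝ) ≤ 1 := by
      rw [div_le_one hγpos]; exact hγR
    linarith
  induction k with
  | zero =>
      rw [pow_zero, one_mul]
      have h1 : (Dset S β x0 y0 W 0).card ≤ Fintype.card (Fin n → Fin n) :=
        Finset.card_le_univ _
      have h2 : (Fintype.card (Fin n → Fin n) : ℝ) = (n:ℝ)^(n:ℕ) := by
        rw [Fintype.card_fun, Fintype.card_fin]; push_cast; ring
      calc ((Dset S β x0 y0 W 0).card : ℝ) ≤ (Fintype.card (Fin n → Fin n) : ℝ) := by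
            exact_mod_cast h1
        _ = _ := h2
  | succ k ih =>
      have hD := Dstep S β x0 y0 W k
      -- the number of non-equal pairs
      set Aneq := (((Finset.univ : Finset (Fin n)) ×ˢ Finset.univ)).filter
        (fun st : Fin n × Fin n => W st.1 ≠ W st.2) with hAneq
      set Eqs := (((Finset.univ : Finset (Fin n)) ×ˢ Finset.univ)).filter
        (fun st : Fin n × Fin n => W st.1 = W st.2) with hEqs
      have hsplit : Eqs.card + Aneq.card = n * n := by
        rw [hEqs, hAneq, Finset.card_filter_add_card_filter_not,
          Finset.card_product, Finset.card_univ, Fintype.card_fin]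
      have hEqlow : (n:ℝ) * n ≤ (γ:ℝ) * Eqs.card := by
        have h := eq_pairs_card (W := W)
        have h' := Nat.mul_le_mul hIm (le_refl Eqs.card)
        have : n^2 ≤ γ * Eqs.card := le_trans h (Nat.mul_le_mul_right _ hIm)
        calc (n:ℝ) * n = ((n^2 : ℕ) : ℝ) := by push_cast; ring
          _ ≤ ((γ * Eqs.card : ℕ) : ℝ) := by exact_mod_cast this
          _ = (γ:ℝ) * Eqs.card := by push_cast; ring
      have hAup : (Aneq.card : ℝ) ≤ (1 - 1/(γ:ℝ)) * (n * n) := by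
        have h0 : ((Eqs.card + Aneq.card : ℕ) : ℝ) = ((n * n : ℕ) : ℝ) := by
          exact_mod_cast congrArg (Nat.cast : ℕ → ℝ) hsplit
        push_cast at h0
        have h2 : (n:ℝ) * n / γ ≤ Eqs.card := by
          rw [div_le_iff₀ hγpos]
          linarith [hEqlow]
        have hexp : (1 - 1/(γ:ℝ)) * ((n:ℝ) * n) = (n:ℝ) * n - ((n:ℝ) * n)/γ := by
          ring
        linarith
      have hnn : (0:ℝ) < (n:ℝ) * n := by
        have : (0:ℝ) < n := by exact_mod_cast hn
        positivity
      have hDR : ((Dset S β x0 y0 W (k+1)).card : ℝ) * ((n:ℝ) * n) ≤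
          ((Dset S β x0 y0 W k).card : ℝ) * ((1 - 1/(γ:ℝ)) * ((n:ℝ) * n)) := by
        calc ((Dset S β x0 y0 W (k+1)).card : ℝ) * ((n:ℝ) * n)
            = (((Dset S β x0 y0 W (k+1)).card * (n * n) : ℕ) : ℝ) := by push_cast; ring
          _ ≤ (((Dset S β x0 y0 W k).card * Aneq.card : ℕ) : ℝ) := by exact_mod_cast hD
          _ = ((Dset S β x0 y0 W k).card : ℝ) * (Aneq.card : ℝ) := by push_cast; ring
          _ ≤ _ := by
              refine mul_le_mul_of_nonneg_left hAup (by positivity)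
      have step : ((Dset S β x0 y0 W (k+1)).card : ℝ) ≤
          ((Dset S β x0 y0 W k).card : ℝ) * (1 - 1/(γ:ℝ)) := by
        have := (mul_le_mul_iff_of_pos_right hnn).1 (by linarith [hDR] :
          ((Dset S β x0 y0 W (k+1)).card : ℝ) * ((n:ℝ) * n) ≤
            (((Dset S β x0 y0 W k).card : ℝ) * (1 - 1/(γ:ℝ))) * ((n:ℝ) * n))
        exact this
      calc ((Dset S β x0 y0 W (k+1)).card : ℝ)
          ≤ ((Dset S β x0 y0 W k).card : ℝ) * (1 - 1/(γ:ℝ)) := step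
        _ ≤ ((1 - 1/(γ:ℝ))^k * ((n:ℝ)^(n:ℕ))) * (1 - 1/(γ:ℝ)) :=
            mul_le_mul_of_nonneg_right ih hr0
        _ = (1 - 1/(γ:ℝ))^(k+1) * ((n:ℝ)^(n:ℕ)) := by ring

theorem Ccard_le (hn : 0 < n) (k m : ℕ) (hk : k + 1 ≤ m) :
    ((Cset S β x0 y0 W (k+1)).card : ℝ) ≤
      ((Dset S β x0 y0 W k).card : ℝ) * ((2*(S.card:ℝ) + 4*m + 1) / n) := by
  have hC := Cstep S β x0 y0 W k m hk
  have hnR : (0:ℝ) < n := by exact_mod_cast hn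
  have hcast : ((Cset S β x0 y0 W (k+1)).card : ℝ) * ((n:ℝ) * n) ≤
      ((Dset S β x0 y0 W k).card : ℝ) * ((n:ℝ) * (2*(S.card:ℝ) + 4*m + 1)) := by
    calc ((Cset S β x0 y0 W (k+1)).card : ℝ) * ((n:ℝ) * n)
        = (((Cset S β x0 y0 W (k+1)).card * (n * n) : ℕ) : ℝ) := by push_cast; ring
      _ ≤ (((Dset S β x0 y0 W k).card * (n * (2 * S.card + 4 * m + 1)) : ℕ) : ℝ) := by
          exact_mod_cast hC
      _ = _ := by push_cast; ring
  have hnn : (0:ℝ) < (n:ℝ) * n := by positivity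
  have h2 : ((Cset S β x0 y0 W (k+1)).card : ℝ) * ((n:ℝ) * n) ≤
      (((Dset S β x0 y0 W k).card : ℝ) * ((2*(S.card:ℝ) + 4*m + 1) / n)) * ((n:ℝ) * n) := by
    refine hcast.trans (le_of_eq ?_)
    field_simp
  exact le_of_mul_le_mul_right h2 hnn

theorem cover (hx0 : x0 ∉ S) (hy0 : y0 ∉ S) (hxy : x0 ≠ y0) (m : ℕ) :
    (Finset.univ.filter (fun c : Fin n → Fin n =>
        ∀ k ≤ m, W (chX S β x0 c k) ≠ W (chY S β y0 c k)))
      ⊆ Dset S β x0 y0 W m ∪ (Finset.range m).biUnion (fun k => Cset S β x0 y0 W (k+1)) := by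
  intro c hc
  have hNS : ∀ i ≤ m, NS S β x0 y0 W c i := (Finset.mem_filter.1 hc).2
  by_cases hA : ∀ i ≤ m, GoodT S β x0 y0 c i
  · exact Finset.mem_union_left _ ((mem_Dset _ _ _ _ _).2 fun i hi => ⟨hA i hi, hNS i hi⟩)
  · push_neg at hA
    obtain ⟨t, htm, hbad⟩ := hA
    have hex : ∃ t, ¬ GoodT S β x0 y0 c t := ⟨t, hbad⟩
    have hbad0 : ¬ GoodT S β x0 y0 c (Nat.find hex) := Nat.find_spec hex
    have hmin : ∀ i < Nat.find hex, GoodT S β x0 y0 c i :=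
      fun i hi => not_not.1 (Nat.find_min hex hi)
    have ht0le : Nat.find hex ≤ t := Nat.find_min' hex hbad
    have hGood0 : GoodT S β x0 y0 c 0 := by
      refine ⟨hx0, hy0, ?_, ?_, hxy⟩
      · simp [prevT]
      · simp [prevT]
    have ht0pos : 0 < Nat.find hex := by
      rcases Nat.eq_zero_or_pos (Nat.find hex) with h0 | h
      · exact absurd (h0 ▸ hbad0) (not_not.2 hGood0)
      · exact h
    refine Finset.mem_union_right _ (Finset.mem_biUnion.2
      ⟨Nat.find hex - 1, Finset.mem_range.2 (by omega), ?_⟩)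
    have hsucc : Nat.find hex - 1 + 1 = Nat.find hex := by omega
    rw [hsucc]
    exact (mem_Cset _ _ _ _ _).2 ⟨fun i hi => ⟨hmin i hi, hNS i (by omega)⟩, hbad0⟩

theorem core_bound (hn : 0 < n) (hx0 : x0 ∉ S) (hy0 : y0 ∉ S) (hxy : x0 ≠ y0)
    {γ : ℕ} (hγ : 1 ≤ γ) (hIm : (Finset.univ.image W).card ≤ γ) (m : ℕ) :
    (((Finset.univ.filter (fun c : Fin n → Fin n =>
        ∀ k ≤ m, W (chX S β x0 c k) ≠ W (chY S β y0 c k)))).card : ℝ) ≤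
      ((1 - 1/(γ:ℝ))^m + (2*(S.card:ℝ) + 4*m + 1) * γ / n) * ((n:ℝ)^(n:ℕ)) := by
  have hγR : (1:ℝ) ≤ (γ:ℝ) := by exact_mod_cast hγ
  have hγpos : (0:ℝ) < γ := by linarith
  have hnR : (0:ℝ) < n := by exact_mod_cast hn
  have hr0 : (0:ℝ) ≤ 1 - 1/(γ:ℝ) := by
    have : 1/(γ:ℝ) ≤ 1 := by rw [div_le_one hγpos]; exact hγR
    linarith
  set r := 1 - 1/(γ:ℝ) with hrdef
  -- cardinality split
  have hcard : ((Finset.univ.filter (fun c : Fin n → Fin n =>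
      ∀ k ≤ m, W (chX S β x0 c k) ≠ W (chY S β y0 c k))).card : ℝ) ≤
      ((Dset S β x0 y0 W m).card : ℝ) +
        ∑ k ∈ Finset.range m, ((Cset S β x0 y0 W (k+1)).card : ℝ) := by
    have h1 := Finset.card_le_card (cover S β x0 y0 W hx0 hy0 hxy m)
    have h2 := Finset.card_union_le (Dset S β x0 y0 W m)
      ((Finset.range m).biUnion (fun k => Cset S β x0 y0 W (k+1)))
    have h3 := Finset.card_biUnion_le (s := Finset.range m)
      (t := fun k => Cset S β x0 y0 W (k+1))
    have := h1.trans (h2.trans (Nat.add_le_add_left h3 _))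
    calc ((Finset.univ.filter (fun c : Fin n → Fin n =>
        ∀ k ≤ m, W (chX S β x0 c k) ≠ W (chY S β y0 c k))).card : ℝ)
        ≤ (((Dset S β x0 y0 W m).card +
            ∑ k ∈ Finset.range m, (Cset S β x0 y0 W (k+1)).card : ℕ) : ℝ) := by
          exact_mod_cast this
      _ = _ := by push_cast; ring
  -- geometric sum bound
  have hgeom : ∑ k ∈ Finset.range m, r^k ≤ (γ:ℝ) := by
    have hmul := geom_sum_mul r m
    have h1r : 1 - r = 1/(γ:ℝ) := by rw [hrdef]; ring
    have hsum : (∑ k ∈ Finset.range m, r^k) * (1/(γ:ℝ)) = 1 - r^m := by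
      have : (∑ k ∈ Finset.range m, r^k) * (r - 1) = r^m - 1 := hmul
      have h2 : (∑ k ∈ Finset.range m, r^k) * (1 - r) = 1 - r^m := by linarith
      rwa [h1r] at h2
    have hrm : (0:ℝ) ≤ r^m := pow_nonneg hr0 m
    have : (∑ k ∈ Finset.range m, r^k) = (γ:ℝ) * (1 - r^m) := by
      field_simp at hsum ⊢
      linarith [hsum]
    rw [this]
    nlinarith
  -- bound each C term
  have hCterm : ∀ k ∈ Finset.range m, ((Cset S β x0 y0 W (k+1)).card : ℝ) ≤
      (2*(S.card:ℝ) + 4*m + 1) / n * (r^k * ((n:ℝ)^(n:ℕ))) := by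
    intro k hk
    have hkm : k + 1 ≤ m := Finset.mem_range.1 hk
    have h1 := Ccard_le S β x0 y0 W hn k m hkm
    have h2 := Dcard_le S β x0 y0 W hn hγ hIm k
    calc ((Cset S β x0 y0 W (k+1)).card : ℝ)
        ≤ ((Dset S β x0 y0 W k).card : ℝ) * ((2*(S.card:ℝ) + 4*m + 1) / n) := h1
      _ ≤ (r^k * ((n:ℝ)^(n:ℕ))) * ((2*(S.card:ℝ) + 4*m + 1) / n) := by
          refine mul_le_mul_of_nonneg_right h2 (by positivity)
      _ = _ := by ring
  have hDm := Dcard_le S β x0 y0 W hn hγ hIm m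
  have hsumC : ∑ k ∈ Finset.range m, ((Cset S β x0 y0 W (k+1)).card : ℝ) ≤
      (2*(S.card:ℝ) + 4*m + 1) * γ / n * ((n:ℝ)^(n:ℕ)) := by
    calc ∑ k ∈ Finset.range m, ((Cset S β x0 y0 W (k+1)).card : ℝ)
        ≤ ∑ k ∈ Finset.range m, (2*(S.card:ℝ) + 4*m + 1) / n * (r^k * ((n:ℝ)^(n:ℕ))) :=
          Finset.sum_le_sum hCterm
      _ = (2*(S.card:ℝ) + 4*m + 1) / n * ((n:ℝ)^(n:ℕ)) * (∑ k ∈ Finset.range m, r^k) := by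
          rw [Finset.mul_sum]; refine Finset.sum_congr rfl fun k _ => by ring
      _ ≤ (2*(S.card:ℝ) + 4*m + 1) / n * ((n:ℝ)^(n:ℕ)) * γ := by
          refine mul_le_mul_of_nonneg_left hgeom (by positivity)
      _ = (2*(S.card:ℝ) + 4*m + 1) * γ / n * ((n:ℝ)^(n:ℕ)) := by ring
  calc ((Finset.univ.filter (fun c : Fin n → Fin n =>
      ∀ k ≤ m, W (chX S β x0 c k) ≠ W (chY S β y0 c k))).card : ℝ)
      ≤ ((Dset S β x0 y0 W m).card : ℝ) +
          ∑ k ∈ Finset.range m, ((Cset S β x0 y0 W (k+1)).card : ℝ) := hcard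
    _ ≤ r^m * ((n:ℝ)^(n:ℕ)) + (2*(S.card:ℝ) + 4*m + 1) * γ / n * ((n:ℝ)^(n:ℕ)) := by
        exact add_le_add hDm hsumC
    _ = (r^m + (2*(S.card:ℝ) + 4*m + 1) * γ / n) * ((n:ℝ)^(n:ℕ)) := by ring

end Core4

section Numeric

theorem exists_rpow_large (δ K : ℝ) (hδ : 0 < δ) :
    ∃ N : ℕ, 1 ≤ N ∧ ∀ n : ℕ, n ≥ N → K ≤ (n:ℝ)^δ := by
  set M := max K 1 with hM
  have hM1 : (1:ℝ) ≤ M := le_max_right K 1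
  have hM0 : (0:ℝ) < M := lt_of_lt_of_le zero_lt_one hM1
  refine ⟨⌈M^((1:ℝ)/δ)⌉₊ + 1, Nat.succ_le_succ (Nat.zero_le _), fun n hn => ?_⟩
  have hcast : M^((1:ℝ)/δ) ≤ (n:ℝ) := by
    have h1 : M^((1:ℝ)/δ) ≤ (⌈M^((1:ℝ)/δ)⌉₊ : ℝ) := Nat.le_ceil _
    have h2 : ((⌈M^((1:ℝ)/δ)⌉₊ + 1 : ℕ) : ℝ) ≤ (n:ℝ) := by exact_mod_cast hn
    push_cast at h2
    linarith
  have h3 := Real.rpow_le_rpow (Real.rpow_nonneg hM0.le _) hcast hδ.le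
  have h4 : (M^((1:ℝ)/δ))^δ = M := by
    rw [← Real.rpow_mul hM0.le, one_div_mul_cancel hδ.ne', Real.rpow_one]
  rw [h4] at h3
  exact le_trans (le_max_left K 1) h3

theorem one_le_rpow' {a e : ℝ} (ha : 1 ≤ a) (he : 0 ≤ e) : (1:ℝ) ≤ a^e := by
  have := Real.rpow_le_rpow_of_exponent_le ha he
  rwa [Real.rpow_zero] at this

set_option maxHeartbeats 1000000 in
theorem numeric_final (ε : ℝ) (hε0 : 0 < ε) (hε8 : ε < 1/8) (hcase : 5*ε < 3/8) :
    ∃ N : ℕ, 1 ≤ N ∧ ∀ n : ℕ, n ≥ N →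
      2 ≤ lambdaN ε n ∧ 1 ≤ gammaN ε n ∧
      ∀ s : ℕ, (s:ℝ) ≤ (n:ℝ)^((1:ℝ)/2+ε) + (n:ℝ)^((1:ℝ)/4+2*ε) →
      (1 - 1/(gammaN ε n : ℝ))^(lambdaN ε n - 2) +
        (2*(s:ℝ) + 4*((lambdaN ε n - 2 : ℕ):ℝ) + 1) * (gammaN ε n : ℝ) / n ≤
        6 * (n:ℝ)^(-(3/8:ℝ)+5*ε) := by
  obtain ⟨N1, hN1a, hN1⟩ := exists_rpow_large ((1:ℝ)/8+5*ε) 2 (by linarith)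
  obtain ⟨N2, _, hN2⟩ := exists_rpow_large ((1:ℝ)/4-ε) 2 (by linarith)
  obtain ⟨N3, _, hN3⟩ := exists_rpow_large ((3:ℝ)/8-4*ε) 5 (by linarith)
  obtain ⟨N4, _, hN4⟩ := exists_rpow_large (ε/2) (2/ε+3) (by linarith)
  refine ⟨N1 + N2 + N3 + N4, by omega, fun n hn => ?_⟩
  have h1 := hN1 n (by omega)
  have h2 := hN2 n (by omega)
  have h3 := hN3 n (by omega)
  have h4 := hN4 n (by omega)
  have hn1 : 1 ≤ n := by omega
  have ha1 : (1:ℝ) ≤ (n:ℝ) := by exact_mod_cast hn1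
  have hapos : (0:ℝ) < (n:ℝ) := by linarith
  set a : ℝ := (n:ℝ) with hadef
  have hlam2 : 2 ≤ lambdaN ε n := by
    have h1' : ((2:ℕ):ℝ) ≤ (n:ℝ)^((1:ℝ)/8+5*ε) := by exact_mod_cast h1
    exact Nat.le_floor h1'
  have hγ1 : 1 ≤ gammaN ε n := by
    have h1' : ((1:ℕ):ℝ) ≤ (n:ℝ)^((1:ℝ)/8+4*ε) := by
      rw [Nat.cast_one]
      exact one_le_rpow' ha1 (by linarith)
    exact Nat.le_floor h1'
  refine ⟨hlam2, hγ1, fun s hs => ?_⟩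
  set γ : ℕ := gammaN ε n with hγdef
  set lam : ℕ := lambdaN ε n with hlamdef
  set m : ℕ := lam - 2 with hmdef
  have hγR1 : (1:ℝ) ≤ (γ:ℝ) := by exact_mod_cast hγ1
  have hγpos : (0:ℝ) < (γ:ℝ) := by linarith
  -- floor bounds
  have hγle : (γ:ℝ) ≤ a^((1:ℝ)/8+4*ε) := Nat.floor_le (Real.rpow_nonneg hapos.le _)
  have hlamle : (lam:ℝ) ≤ a^((1:ℝ)/8+5*ε) := Nat.floor_le (Real.rpow_nonneg hapos.le _)
  have hlamge : a^((1:ℝ)/8+5*ε) - 1 ≤ (lam:ℝ) := by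
    have hfl : lam = ⌊a^((1:ℝ)/8+5*ε)⌋₊ := rfl
    have := Nat.lt_floor_add_one (a^((1:ℝ)/8+5*ε))
    rw [← hfl] at this
    push_cast at this
    linarith
  have hmR : (m:ℝ) = (lam:ℝ) - 2 := by
    rw [hmdef]
    push_cast [Nat.cast_sub hlam2]
    ring
  -- positivity of the various powers
  have hp0 : (0:ℝ) < a^((1:ℝ)/8+4*ε) := Real.rpow_pos_of_pos hapos _
  have hp1 : (1:ℝ) ≤ a^((1:ℝ)/8+5*ε) := one_le_rpow' ha1 (by linarith)
  have hp2 : (1:ℝ) ≤ a^((1:ℝ)/8+4*ε) := one_le_rpow' ha1 (by linarith)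
  have hp3 : (1:ℝ) ≤ a^(ε/2) := one_le_rpow' ha1 (by linarith)
  have hp4 : (1:ℝ) ≤ a^((1:ℝ)/2+ε) := one_le_rpow' ha1 (by linarith)
  -- rpow product identities
  have hprod1 : a^((1:ℝ)/4-ε) * a^((1:ℝ)/4+2*ε) = a^((1:ℝ)/2+ε) := by
    rw [← Real.rpow_add hapos]; congr 1; ring
  have hprod2 : a^((3:ℝ)/8-4*ε) * a^((1:ℝ)/8+5*ε) = a^((1:ℝ)/2+ε) := by
    rw [← Real.rpow_add hapos]; congr 1; ring
  have hprod3 : a^((1:ℝ)/2+ε) * a^((1:ℝ)/8+4*ε) = a^((5:ℝ)/8+5*ε) := by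
    rw [← Real.rpow_add hapos]; congr 1; ring
  have hprod4 : a^(ε/2) * a^(ε/2) = a^ε := by
    rw [← Real.rpow_add hapos]; congr 1; ring
  have hprod5 : a^ε * a^((1:ℝ)/8+4*ε) = a^((1:ℝ)/8+5*ε) := by
    rw [← Real.rpow_add hapos]; congr 1; ring
  have hdiv : a^((5:ℝ)/8+5*ε) / a = a^(-(3/8:ℝ)+5*ε) := by
    rw [show a^(-(3/8:ℝ)+5*ε) = a^((5:ℝ)/8+5*ε - 1) by congr 1; ring,
      Real.rpow_sub hapos, Real.rpow_one]
  -- bound on B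
  have hB : 2*(s:ℝ) + 4*(m:ℝ) + 1 ≤ 4 * a^((1:ℝ)/2+ε) := by
    have e1 : 2 * a^((1:ℝ)/4+2*ε) ≤ a^((1:ℝ)/2+ε) := by
      rw [← hprod1]
      exact mul_le_mul_of_nonneg_right h2 (Real.rpow_nonneg hapos.le _)
    have e2 : 4*(m:ℝ) + 1 ≤ 4 * a^((1:ℝ)/8+5*ε) + 1 := by
      have : (m:ℝ) ≤ (lam:ℝ) := by rw [hmR]; linarith
      linarith [this.trans hlamle]
    have e3 : 4 * a^((1:ℝ)/8+5*ε) + 1 ≤ 5 * a^((1:ℝ)/8+5*ε) := by linarith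
    have e4 : 5 * a^((1:ℝ)/8+5*ε) ≤ a^((1:ℝ)/2+ε) := by
      rw [← hprod2]
      exact mul_le_mul_of_nonneg_right h3 (Real.rpow_nonneg hapos.le _)
    linarith [hs, e1, e2, e3, e4]
  -- bound on B·γ/n
  have hBγ : (2*(s:ℝ) + 4*(m:ℝ) + 1) * (γ:ℝ) / a ≤ 4 * a^(-(3/8:ℝ)+5*ε) := by
    have e1 : (2*(s:ℝ) + 4*(m:ℝ) + 1) * (γ:ℝ) ≤ (4 * a^((1:ℝ)/2+ε)) * a^((1:ℝ)/8+4*ε) := by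
      have hBpos : (0:ℝ) ≤ 2*(s:ℝ) + 4*(m:ℝ) + 1 := by positivity
      exact mul_le_mul hB hγle hγpos.le (by positivity)
    have e2 : (4 * a^((1:ℝ)/2+ε)) * a^((1:ℝ)/8+4*ε) = 4 * a^((5:ℝ)/8+5*ε) := by
      rw [mul_assoc, hprod3]
    rw [div_le_iff₀ hapos]
    calc (2*(s:ℝ) + 4*(m:ℝ) + 1) * (γ:ℝ) ≤ 4 * a^((5:ℝ)/8+5*ε) := by rw [← e2]; exact e1
      _ = 4 * a^(-(3/8:ℝ)+5*ε) * a := by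
          rw [← hdiv]; field_simp
  -- bound on r^m
  have hrm : (1 - 1/(γ:ℝ))^m ≤ a^(-(3/8:ℝ)+5*ε) := by
    have hr0 : (0:ℝ) ≤ 1 - 1/(γ:ℝ) := by
      have : 1/(γ:ℝ) ≤ 1 := by rw [div_le_one hγpos]; exact hγR1
      linarith
    have hexp1 : (1 - 1/(γ:ℝ)) ≤ Real.exp (-(1/(γ:ℝ))) := by
      have := Real.add_one_le_exp (-(1/(γ:ℝ)))
      linarith
    have hexp2 : (1 - 1/(γ:ℝ))^m ≤ Real.exp (-(1/(γ:ℝ)))^m :=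
      pow_le_pow_left₀ hr0 hexp1 m
    have hexp3 : Real.exp (-(1/(γ:ℝ)))^m = Real.exp (-((m:ℝ)/(γ:ℝ))) := by
      rw [← Real.exp_nat_mul]
      congr 1
      ring
    -- m ≥ γ log a
    have hlog : Real.log a ≤ (2/ε) * a^(ε/2) := by
      have := Real.log_le_rpow_div hapos.le (by linarith : (0:ℝ) < ε/2)
      calc Real.log a ≤ a^(ε/2)/(ε/2) := this
        _ = (2/ε) * a^(ε/2) := by field_simp
    have haε : (2/ε) * a^(ε/2) + 3 ≤ a^ε := by
      rw [← hprod4]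
      nlinarith [hp3, h4]
    have hm3 : a^ε * a^((1:ℝ)/8+4*ε) - 3 ≤ (m:ℝ) := by
      rw [hprod5, hmR]
      linarith
    have hmγ : (γ:ℝ) * Real.log a ≤ (m:ℝ) := by
      have l1 : Real.log a + 3 ≤ a^ε := by linarith
      have l2 : (γ:ℝ) * Real.log a ≤ a^((1:ℝ)/8+4*ε) * Real.log a ∨ Real.log a < 0 := by
        rcases le_or_gt 0 (Real.log a) with h | h
        · exact Or.inl (mul_le_mul_of_nonneg_right hγle h)
        · exact Or.inr h
      have hlognn : 0 ≤ Real.log a := Real.log_nonneg ha1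
      have l3 : (γ:ℝ) * Real.log a ≤ a^((1:ℝ)/8+4*ε) * Real.log a :=
        mul_le_mul_of_nonneg_right hγle hlognn
      have l4 : a^((1:ℝ)/8+4*ε) * Real.log a ≤ a^((1:ℝ)/8+4*ε) * (a^ε - 3) := by
        refine mul_le_mul_of_nonneg_left (by linarith) (by positivity)
      have l5 : a^((1:ℝ)/8+4*ε) * (a^ε - 3) ≤ a^ε * a^((1:ℝ)/8+4*ε) - 3 := by
        nlinarith [hp2]
      linarith
    have hfin : -((m:ℝ)/(γ:ℝ)) ≤ -Real.log a := by
      rw [neg_le_neg_iff, le_div_iff₀ hγpos]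
      linarith [hmγ]
    have hexp4 : Real.exp (-((m:ℝ)/(γ:ℝ))) ≤ Real.exp (-Real.log a) :=
      Real.exp_le_exp.2 hfin
    have hexp5 : Real.exp (-Real.log a) = a^(-(1:ℝ)) := by
      rw [Real.exp_neg, Real.exp_log hapos, Real.rpow_neg_one]
    have hexp6 : a^(-(1:ℝ)) ≤ a^(-(3/8:ℝ)+5*ε) :=
      Real.rpow_le_rpow_of_exponent_le ha1 (by linarith)
    calc (1 - 1/(γ:ℝ))^m ≤ Real.exp (-(1/(γ:ℝ)))^m := hexp2
      _ = Real.exp (-((m:ℝ)/(γ:ℝ))) := hexp3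
      _ ≤ Real.exp (-Real.log a) := hexp4
      _ = a^(-(1:ℝ)) := hexp5
      _ ≤ a^(-(3/8:ℝ)+5*ε) := hexp6
  have hfinal : (1 - 1/(γ:ℝ))^m + (2*(s:ℝ) + 4*(m:ℝ) + 1) * (γ:ℝ) / a ≤
      5 * a^(-(3/8:ℝ)+5*ε) := by linarith
  have hpos : (0:ℝ) ≤ a^(-(3/8:ℝ)+5*ε) := Real.rpow_nonneg hapos.le _
  linarith

end Numeric

/-- For `0 < ε < 1/8`, for `n` large enough: fix an `a`-transition mapping `f` with at
most `α_n` cyclic points and height at most `α_n`, and a (partial) `b`-transition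
function `β` defined on `S = C ∪ β(Cyc(F))` such that `F` has at most `β_n` cyclic points
and height at most `β_n`, `β(q) ∉ C` for every `F`-cyclic `q`, the induced map `G` on
`Cyc(F)` maps `Cyc(F)` into itself with at most `γ_n` cyclic points and height at most
`γ_n`, and `β(β(q)) ∉ S` for every `G`-cyclic `q`. If the remaining `b`-transitions are
chosen uniformly at random and independently in `[n]`, then for any two `G`-cyclic states
`p` and `q`, the probability that `δ_{b^j w_n}(p) ≠ δ_{b^j w_n}(q)` for every
`j ∈ {0, …, λ_n}` is at most `6 n^(-3/8+5ε)`. -/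
theorem synchronize_pair_bound (ε : ℝ) (hε0 : 0 < ε) (hε1 : ε < 1/8) :
    ∃ N : ℕ, ∀ n ≥ N, ∀ f β : Fin n → Fin n, ∀ p q : Fin n,
      (cyclicPts f).card ≤ alphaN ε n →
      height f ≤ alphaN ε n →
      (∀ x ∈ cyclicPts f, Fmap ε f β x ∈ cyclicPts f) →
      (CycF ε f β).card ≤ betaN ε n →
      (cyclicPts f).sup (heightOf (Fmap ε f β)) ≤ betaN ε n →
      (∀ x ∈ CycF ε f β, β x ∉ cyclicPts f) →
      (∀ x ∈ CycF ε f β, Gmap ε f β x ∈ CycF ε f β) →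
      ((CycF ε f β).filter (IsCyclicPt (Gmap ε f β))).card ≤ gammaN ε n →
      (CycF ε f β).sup (heightOf (Gmap ε f β)) ≤ gammaN ε n →
      (∀ x ∈ (CycF ε f β).filter (IsCyclicPt (Gmap ε f β)), β (β x) ∉ Sset ε f β) →
      p ∈ (CycF ε f β).filter (IsCyclicPt (Gmap ε f β)) →
      q ∈ (CycF ε f β).filter (IsCyclicPt (Gmap ε f β)) →
      (((Finset.univ : Finset (Fin n → Fin n)).filter
          (fun c => ∀ j ≤ lambdaN ε n,
            act (extAut ε f β c) (List.replicate j Letter.b ++ wWord ε n) p ≠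
            act (extAut ε f β c) (List.replicate j Letter.b ++ wWord ε n) q)).card : ℝ)
        / (Fintype.card (Fin n → Fin n) : ℝ)
        ≤ 6 * (n : ℝ) ^ (-(3/8 : ℝ) + 5*ε) := by
  rcases le_or_gt (3/8 : ℝ) (5*ε) with hcase | hcase
  · -- trivial case: the right-hand side is at least `6`
    refine ⟨1, fun n hn f β p q h1 h2 h3 h4 h5 h6 h7 h8 h9 h10 hp hq => ?_⟩
    have hn0 : 0 < n := hn
    have ha1 : (1:ℝ) ≤ (n:ℝ) := by exact_mod_cast hn
    have hNeq : ((Fintype.card (Fin n → Fin n) : ℕ) : ℝ) = (n:ℝ)^(n:ℕ) := by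
      rw [Fintype.card_fun, Fintype.card_fin]; push_cast; ring
    have hNpos : (0:ℝ) < ((Fintype.card (Fin n → Fin n) : ℕ) : ℝ) := by
      rw [hNeq]
      exact pow_pos (by exact_mod_cast hn0) n
    have hLHS : (((Finset.univ : Finset (Fin n → Fin n)).filter
        (fun c => ∀ j ≤ lambdaN ε n,
          act (extAut ε f β c) (List.replicate j Letter.b ++ wWord ε n) p ≠
          act (extAut ε f β c) (List.replicate j Letter.b ++ wWord ε n) q)).card : ℝ)
        / (Fintype.card (Fin n → Fin n) : ℝ) ≤ 1 := by
      rw [div_le_one hNpos]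
      have := Finset.card_filter_le (Finset.univ : Finset (Fin n → Fin n))
        (fun c => ∀ j ≤ lambdaN ε n,
          act (extAut ε f β c) (List.replicate j Letter.b ++ wWord ε n) p ≠
          act (extAut ε f β c) (List.replicate j Letter.b ++ wWord ε n) q)
      rw [Finset.card_univ] at this
      exact_mod_cast this
    have hRHS : (1:ℝ) ≤ 6 * (n:ℝ)^(-(3/8:ℝ)+5*ε) := by
      have h6 : (1:ℝ) ≤ (n:ℝ)^(-(3/8:ℝ)+5*ε) := one_le_rpow' ha1 (by linarith)
      linarith
    linarith
  · -- main case
    obtain ⟨N0, hN0a, hN0⟩ := numeric_final ε hε0 hε1 hcase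
    refine ⟨N0, fun n hn f β p q h1 h2 h3 h4 h5 h6 h7 h8 h9 h10 hp hq => ?_⟩
    obtain ⟨hlam2, hγ1, hnum⟩ := hN0 n hn
    have hn0 : 0 < n := Fin.pos p
    have hp' : p ∈ CycF ε f β := (Finset.mem_filter.1 hp).1
    have hq' : q ∈ CycF ε f β := (Finset.mem_filter.1 hq).1
    have hpcyc : IsCyclicPt (Gmap ε f β) p := (Finset.mem_filter.1 hp).2
    have hqcyc : IsCyclicPt (Gmap ε f β) q := (Finset.mem_filter.1 hq).2
    have hpS : p ∈ Sset ε f β :=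
      cyclicPts_subset_Sset ε f β (CycF_subset_cyclicPts ε f β hp')
    have hqS : q ∈ Sset ε f β :=
      cyclicPts_subset_Sset ε f β (CycF_subset_cyclicPts ε f β hq')
    have hx0 : β (β p) ∉ Sset ε f β := h10 p hp
    have hy0 : β (β q) ∉ Sset ε f β := h10 q hq
    have hNeq : ((Fintype.card (Fin n → Fin n) : ℕ) : ℝ) = (n:ℝ)^(n:ℕ) := by
      rw [Fintype.card_fun, Fintype.card_fin]; push_cast; ring
    have hNpos : (0:ℝ) < ((Fintype.card (Fin n → Fin n) : ℕ) : ℝ) := by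
      rw [hNeq]
      exact pow_pos (by exact_mod_cast hn0) n
    rcases eq_or_ne p q with rfl | hpq
    · -- `p = q`: the event is empty
      have hempty : ((Finset.univ : Finset (Fin n → Fin n)).filter
          (fun c => ∀ j ≤ lambdaN ε n,
            act (extAut ε f β c) (List.replicate j Letter.b ++ wWord ε n) p ≠
            act (extAut ε f β c) (List.replicate j Letter.b ++ wWord ε n) p)) = ∅ :=
        Finset.filter_eq_empty_iff.2 (fun c _ hpred => (hpred 0 (Nat.zero_le _)) rfl)
      rw [hempty, Finset.card_empty, Nat.cast_zero, zero_div]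
      have : (0:ℝ) ≤ (n:ℝ)^(-(3/8:ℝ)+5*ε) := Real.rpow_nonneg (Nat.cast_nonneg n) _
      linarith
    · -- `p ≠ q`
      have hxy : β (β p) ≠ β (β q) := by
        intro h
        have hG : Gmap ε f β p = Gmap ε f β q := by unfold Gmap; rw [h]
        exact hpq (cyclic_inj hpcyc hqcyc hG)
      have hImW : (Finset.univ.image (Wfix ε f β)).card ≤ gammaN ε n := by
        refine le_trans (Finset.card_le_card ?_) h8
        intro z hz
        obtain ⟨s, _, rfl⟩ := Finset.mem_image.1 hz
        exact Wfix_mem_CycG ε f β h2 h3 h5 h7 h9 s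
      -- the event is contained in the core event
      have hsub : ((Finset.univ : Finset (Fin n → Fin n)).filter
          (fun c => ∀ j ≤ lambdaN ε n,
            act (extAut ε f β c) (List.replicate j Letter.b ++ wWord ε n) p ≠
            act (extAut ε f β c) (List.replicate j Letter.b ++ wWord ε n) q)) ⊆
          (Finset.univ.filter (fun c : Fin n → Fin n =>
            ∀ k ≤ lambdaN ε n - 2,
              Wfix ε f β (chX (Sset ε f β) β (β (β p)) c k) ≠
              Wfix ε f β (chY (Sset ε f β) β (β (β q)) c k))) := by
        intro c hc
        rw [Finset.mem_filter] at hc ⊢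
        refine ⟨Finset.mem_univ _, fun k hk => ?_⟩
        have hj := hc.2 (k+2) (by omega)
        have hact : ∀ s : Fin n,
            act (extAut ε f β c) (List.replicate (k+2) Letter.b ++ wWord ε n) s
              = Wfix ε f β ((bstep (Sset ε f β) β c)^[k+2] s) := by
          intro s
          rw [act_append]
          have hrep : act (extAut ε f β c) (List.replicate (k+2) Letter.b) s
              = (bstep (Sset ε f β) β c)^[k+2] s := by
            rw [act_replicate]; rfl
          rw [hrep]
          exact act_wWord ε f β (fun x => if x ∈ Sset ε f β then β x else c x)
            (fun x hx => if_pos hx) h2 h3 h5 h7 _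
        have hstep2 : ∀ z : Fin n, z ∈ CycF ε f β →
            (bstep (Sset ε f β) β c)^[k+2] z = (bstep (Sset ε f β) β c)^[k] (β (β z)) := by
          intro z hz
          rw [Function.iterate_add_apply]
          congr 1
          have hz1 : bstep (Sset ε f β) β c z = β z :=
            if_pos (cyclicPts_subset_Sset ε f β (CycF_subset_cyclicPts ε f β hz))
          have hz2 : bstep (Sset ε f β) β c (β z) = β (β z) :=
            if_pos (beta_mem_Sset ε f β hz)
          have h2it : (bstep (Sset ε f β) β c)^[2] z
              = bstep (Sset ε f β) β c (bstep (Sset ε f β) β c z) := by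
            rw [Function.iterate_succ_apply', Function.iterate_one]
          rw [h2it, hz1, hz2]
        rw [hact p, hact q, hstep2 p hp', hstep2 q hq'] at hj
        exact hj
      have hcore := core_bound (Sset ε f β) β (β (β p)) (β (β q)) (Wfix ε f β) hn0
        hx0 hy0 hxy hγ1 hImW (lambdaN ε n - 2)
      have hcardle := Finset.card_le_card hsub
      -- bound on the cardinality of S
      have hScard : ((Sset ε f β).card : ℝ) ≤
          (n:ℝ)^((1:ℝ)/2+ε) + (n:ℝ)^((1:ℝ)/4+2*ε) := by
        have hs1 : (Sset ε f β).card ≤ (cyclicPts f).card + (CycF ε f β).card :=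
          (Finset.card_union_le _ _).trans
            (Nat.add_le_add_left Finset.card_image_le _)
        have hs2 : (Sset ε f β).card ≤ alphaN ε n + betaN ε n :=
          hs1.trans (Nat.add_le_add h1 h4)
        have hf1 : ((alphaN ε n : ℕ) : ℝ) ≤ (n:ℝ)^((1:ℝ)/2+ε) :=
          Nat.floor_le (Real.rpow_nonneg (Nat.cast_nonneg n) _)
        have hf2 : ((betaN ε n : ℕ) : ℝ) ≤ (n:ℝ)^((1:ℝ)/4+2*ε) :=
          Nat.floor_le (Real.rpow_nonneg (Nat.cast_nonneg n) _)
        calc ((Sset ε f β).card : ℝ) ≤ ((alphaN ε n + betaN ε n : ℕ) : ℝ) := by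
              exact_mod_cast hs2
          _ = ((alphaN ε n : ℕ) : ℝ) + ((betaN ε n : ℕ) : ℝ) := by push_cast; ring
          _ ≤ _ := add_le_add hf1 hf2
      have hnum2 := hnum (Sset ε f β).card hScard
      rw [div_le_iff₀ hNpos]
      calc (((Finset.univ : Finset (Fin n → Fin n)).filter
            (fun c => ∀ j ≤ lambdaN ε n,
              act (extAut ε f β c) (List.replicate j Letter.b ++ wWord ε n) p ≠
              act (extAut ε f β c) (List.replicate j Letter.b ++ wWord ε n) q)).card : ℝ)
          ≤ ((Finset.univ.filter (fun c : Fin n → Fin n =>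
              ∀ k ≤ lambdaN ε n - 2,
                Wfix ε f β (chX (Sset ε f β) β (β (β p)) c k) ≠
                Wfix ε f β (chY (Sset ε f β) β (β (β q)) c k))).card : ℝ) := by
            exact_mod_cast hcardle
        _ ≤ ((1 - 1/(gammaN ε n : ℝ))^(lambdaN ε n - 2) +
              (2*((Sset ε f β).card:ℝ) + 4*(lambdaN ε n - 2 : ℕ) + 1) *
                (gammaN ε n : ℝ) / n) * ((n:ℝ)^(n:ℕ)) := hcore
        _ ≤ (6 * (n:ℝ)^(-(3/8:ℝ)+5*ε)) * ((n:ℝ)^(n:ℕ)) := by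
            refine mul_le_mul_of_nonneg_right hnum2 ?_
            positivity
        _ = 6 * (n:ℝ)^(-(3/8:ℝ)+5*ε) * (Fintype.card (Fin n → Fin n) : ℝ) := by
            rw [hNeq]
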